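/- (Second Analyticity Theorem) Let ζ ∈ (0,1), let r ∈ ℕ with r ≥ 1, and let (a_n)_{n∈ℕ} be a summable sequence of nonnegative real numbers. Then for every z in the open set U = {z ∈ ℂ : |z| > 1} \ closure(𝒵) the series F_r(z) = Σ_{n=0}^∞ a_n · (τ_z^{(n)}(1))^r converges, and the function z ↦ F_r(z) is analytic on U. -/

import Mathlib

/-- `h ζ w = ((ζ + w)/(1 + ζ w))^2`. -/
noncomputable def hmap (ζ : ℝ) (w : ℂ) : ℂ := (((ζ : ℂ) + w) / (1 + (ζ : ℂ) * w)) ^ 2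

/-- The `n`-th iterate `τ_z^{(n)}(1)` of `u ↦ h(z·u)` starting from `1`. -/
noncomputable def tauIter (ζ : ℝ) (z : ℂ) : ℕ → ℂ
  | 0 => 1
  | n + 1 => hmap ζ (z * tauIter ζ z n)

/-- The pair `(P_n, Q_n)` of polynomials defined by `P_0 = Q_0 = 1`,
`P_{n+1} = (ζ Q_n + X P_n)²`, `Q_{n+1} = (Q_n + ζ X P_n)²`. -/
noncomputable def PQ (ζ : ℝ) : ℕ → Polynomial ℂ × Polynomial ℂ
  | 0 => (1, 1)
  | n + 1 =>
    (((ζ : ℂ) • (PQ ζ n).2 + Polynomial.X * (PQ ζ n).1) ^ 2,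
     ((PQ ζ n).2 + (ζ : ℂ) • (Polynomial.X * (PQ ζ n).1)) ^ 2)

noncomputable def Ppoly (ζ : ℝ) (n : ℕ) : Polynomial ℂ := (PQ ζ n).1

noncomputable def Qpoly (ζ : ℝ) (n : ℕ) : Polynomial ℂ := (PQ ζ n).2

/-- `R_n = ζ·X·P_n + Q_n`. -/
noncomputable def Rpoly (ζ : ℝ) (n : ℕ) : Polynomial ℂ :=
  (ζ : ℂ) • (Polynomial.X * Ppoly ζ n) + Qpoly ζ n

/-- `𝒵_n`, the set of complex roots of `R_n`. -/
def Zset (ζ : ℝ) (n : ℕ) : Set ℂ := {z : ℂ | (Rpoly ζ n).eval z = 0}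

/-- `𝒵 = ⋃ₙ 𝒵_n`. -/
def ZsetAll (ζ : ℝ) : Set ℂ := ⋃ n : ℕ, Zset ζ n

open Polynomial

/-- compatibility: the complex absolute value, as an `AbsoluteValue` -/
noncomputable def Complex.abs : AbsoluteValue ℂ ℝ where
  toFun z := ‖z‖
  map_mul' := norm_mul
  nonneg' := norm_nonneg
  eq_zero' _ := norm_eq_zero
  add_le' := norm_add_le

theorem Complex.norm_eq_abs (z : ℂ) : ‖z‖ = Complex.abs z := rfl

theorem Complex.abs_apply (z : ℂ) : Complex.abs z = Real.sqrt (Complex.normSq z) :=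
  Complex.norm_def z

theorem Complex.sq_abs (z : ℂ) : Complex.abs z ^ 2 = Complex.normSq z := Complex.sq_norm z

theorem Complex.normSq_eq_abs (z : ℂ) : Complex.normSq z = Complex.abs z ^ 2 :=
  (Complex.sq_abs z).symm

theorem Complex.abs_ofReal (x : ℝ) : Complex.abs (x : ℂ) = |x| := by
  rw [← Complex.norm_eq_abs, Complex.norm_real, Real.norm_eq_abs]

theorem Complex.abs_conj (z : ℂ) : Complex.abs ((starRingEnd ℂ) z) = Complex.abs z :=
  Complex.norm_conj z

theorem Complex.dist_eq_abs (z w : ℂ) : dist z w = Complex.abs (z - w) := Complex.dist_eq z w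

namespace Aux

/-- degree sequence -/
def dseq : ℕ → ℕ
  | 0 => 0
  | n + 1 => 2 * (dseq n + 1)

lemma Ppoly_zero (ζ : ℝ) : Ppoly ζ 0 = 1 := rfl
lemma Qpoly_zero (ζ : ℝ) : Qpoly ζ 0 = 1 := rfl

lemma Ppoly_succ (ζ : ℝ) (n : ℕ) :
    Ppoly ζ (n + 1) = (Polynomial.C (ζ:ℂ) * Qpoly ζ n + Polynomial.X * Ppoly ζ n) ^ 2 := by
  rw [Ppoly]; show (((ζ:ℂ) • (PQ ζ n).2 + Polynomial.X * (PQ ζ n).1) ^ 2) = _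
  rw [smul_eq_C_mul]; rfl

lemma Qpoly_succ (ζ : ℝ) (n : ℕ) :
    Qpoly ζ (n + 1) = (Qpoly ζ n + Polynomial.C (ζ:ℂ) * (Polynomial.X * Ppoly ζ n)) ^ 2 := by
  rw [Qpoly]; show (((PQ ζ n).2 + (ζ:ℂ) • (Polynomial.X * (PQ ζ n).1)) ^ 2) = _
  rw [smul_eq_C_mul]; rfl

lemma Rpoly_eq (ζ : ℝ) (n : ℕ) :
    Rpoly ζ n = Polynomial.C (ζ:ℂ) * (Polynomial.X * Ppoly ζ n) + Qpoly ζ n := by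
  rw [Rpoly, smul_eq_C_mul]

lemma Qpoly_succ_R (ζ : ℝ) (n : ℕ) : Qpoly ζ (n + 1) = (Rpoly ζ n) ^ 2 := by
  rw [Qpoly_succ, Rpoly_eq, add_comm]

/-- monicity and degrees -/
lemma basics (ζ : ℝ) (n : ℕ) :
    (Ppoly ζ n).Monic ∧ (Ppoly ζ n).natDegree = dseq n ∧ (Qpoly ζ n).natDegree ≤ dseq n := by
  induction n with
  | zero => exact ⟨monic_one, by simp [Ppoly_zero, dseq], by simp [Qpoly_zero, dseq]⟩
  | succ n ih =>
    obtain ⟨hm, hd, hq⟩ := ih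
    have hXP : (Polynomial.X * Ppoly ζ n).Monic := (monic_X).mul hm
    have hXPd : (Polynomial.X * Ppoly ζ n).natDegree = dseq n + 1 := by
      rw [natDegree_mul X_ne_zero hm.ne_zero, natDegree_X, hd, add_comm]
    have hCQ : (Polynomial.C (ζ:ℂ) * Qpoly ζ n).natDegree ≤ dseq n := by
      refine le_trans natDegree_mul_le ?_; simp [hq]
    have hdeglt : (Polynomial.C (ζ:ℂ) * Qpoly ζ n).degree < (Polynomial.X * Ppoly ζ n).degree := by
      have h2 : (Polynomial.X * Ppoly ζ n).degree = ((dseq n + 1 : ℕ) : WithBot ℕ) := by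
        rw [degree_eq_natDegree hXP.ne_zero, hXPd]
      rw [h2]
      refine lt_of_le_of_lt (degree_le_natDegree.trans
        ((Nat.cast_le (α := WithBot ℕ)).2 hCQ)) ?_
      exact_mod_cast (Nat.cast_lt (α := WithBot ℕ)).2 (Nat.lt_succ_self _)
    have hS : (Polynomial.C (ζ:ℂ) * Qpoly ζ n + Polynomial.X * Ppoly ζ n).Monic :=
      hXP.add_of_right hdeglt
    have hSd : (Polynomial.C (ζ:ℂ) * Qpoly ζ n + Polynomial.X * Ppoly ζ n).natDegree
        = dseq n + 1 := by
      rw [natDegree_add_eq_right_of_degree_lt hdeglt, hXPd]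
    refine ⟨by rw [Ppoly_succ]; exact hS.pow 2, ?_, ?_⟩
    · rw [Ppoly_succ, hS.natDegree_pow, hSd]; rfl
    · rw [Qpoly_succ]
      refine le_trans (natDegree_pow_le) ?_
      have : (Qpoly ζ n + Polynomial.C (ζ:ℂ) * (Polynomial.X * Ppoly ζ n)).natDegree
          ≤ dseq n + 1 := by
        refine le_trans (natDegree_add_le _ _) ?_
        simp only [max_le_iff]
        exact ⟨le_trans hq (Nat.le_succ _),
          le_trans natDegree_mul_le (by simp [hXPd])⟩
      calc 2 * (Qpoly ζ n + Polynomial.C (ζ:ℂ) * (Polynomial.X * Ppoly ζ n)).natDegree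
          ≤ 2 * (dseq n + 1) := by omega
        _ = dseq (n+1) := rfl

lemma reflects (ζ : ℝ) (n : ℕ) :
    reflect (dseq n) (Ppoly ζ n) = Qpoly ζ n ∧ reflect (dseq n) (Qpoly ζ n) = Ppoly ζ n := by
  induction n with
  | zero =>
    constructor <;> simp [Ppoly_zero, Qpoly_zero, dseq]
  | succ n ih =>
    obtain ⟨hPQ, hQP⟩ := ih
    obtain ⟨hm, hd, hq⟩ := basics ζ n
    have hSdeg : (Polynomial.C (ζ:ℂ) * Qpoly ζ n + Polynomial.X * Ppoly ζ n).natDegree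
        ≤ 1 + dseq n := by
      refine le_trans (natDegree_add_le _ _) ?_
      simp only [max_le_iff]
      refine ⟨le_trans natDegree_mul_le (by simp; omega), le_trans natDegree_mul_le (by simp [hd])⟩
    have hTdeg : (Qpoly ζ n + Polynomial.C (ζ:ℂ) * (Polynomial.X * Ppoly ζ n)).natDegree
        ≤ 1 + dseq n := by
      refine le_trans (natDegree_add_le _ _) ?_
      simp only [max_le_iff]
      refine ⟨by omega, le_trans natDegree_mul_le ?_⟩
      simp only [natDegree_C, zero_add]
      exact le_trans natDegree_mul_le (by simp [hd])
    have hreflQ : reflect (1 + dseq n) (Qpoly ζ n) = Polynomial.X * Ppoly ζ n := by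
      have h := reflect_mul (1 : ℂ[X]) (Qpoly ζ n) (F := 1) (G := dseq n) (by simp) hq
      simpa [hQP] using h
    have hreflXP : reflect (1 + dseq n) (Polynomial.X * Ppoly ζ n) = Qpoly ζ n := by
      have h := reflect_mul (Polynomial.X : ℂ[X]) (Ppoly ζ n) (F := 1) (G := dseq n)
        (by simp) (le_of_eq hd)
      simpa [hPQ] using h
    have hS : reflect (1 + dseq n) (Polynomial.C (ζ:ℂ) * Qpoly ζ n + Polynomial.X * Ppoly ζ n)
        = Qpoly ζ n + Polynomial.C (ζ:ℂ) * (Polynomial.X * Ppoly ζ n) := by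
      rw [reflect_add, reflect_C_mul, hreflQ, hreflXP]; ring
    have hT : reflect (1 + dseq n) (Qpoly ζ n + Polynomial.C (ζ:ℂ) * (Polynomial.X * Ppoly ζ n))
        = Polynomial.C (ζ:ℂ) * Qpoly ζ n + Polynomial.X * Ppoly ζ n := by
      rw [reflect_add, reflect_C_mul, hreflQ, hreflXP]; ring
    have h2 : dseq (n+1) = (1 + dseq n) + (1 + dseq n) := by
      show 2 * (dseq n + 1) = _; ring
    constructor
    · rw [Ppoly_succ, Qpoly_succ, h2, sq, sq, reflect_mul _ _ hSdeg hSdeg, hS]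
    · rw [Ppoly_succ, Qpoly_succ, h2, sq, sq, reflect_mul _ _ hTdeg hTdeg, hT]

lemma evalQ0 (ζ : ℝ) (n : ℕ) : eval 0 (Qpoly ζ n) = 1 := by
  induction n with
  | zero => simp [Qpoly_zero]
  | succ n ih => simp [Qpoly_succ, ih]

lemma evalP0 (ζ : ℝ) (n : ℕ) : eval 0 (Ppoly ζ (n+1)) = (ζ:ℂ)^2 := by
  simp [Ppoly_succ, evalQ0]

lemma conj_eval (ζ : ℝ) (n : ℕ) (z : ℂ) :
    eval ((starRingEnd ℂ) z) (Ppoly ζ n) = (starRingEnd ℂ) (eval z (Ppoly ζ n)) ∧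
    eval ((starRingEnd ℂ) z) (Qpoly ζ n) = (starRingEnd ℂ) (eval z (Qpoly ζ n)) := by
  induction n with
  | zero => simp [Ppoly_zero, Qpoly_zero]
  | succ n ih =>
    obtain ⟨h1, h2⟩ := ih
    constructor <;>
      simp [Ppoly_succ, Qpoly_succ, h1, h2, map_mul, map_add, map_pow, Complex.conj_ofReal]

lemma key_ineq {ζ : ℝ} (hζ0 : 0 < ζ) (hζ1 : ζ < 1) (B u : ℂ)
    (h : Complex.abs u ≤ Complex.abs B) :
    Complex.abs ((ζ:ℂ) * B + u) ≤ Complex.abs (B + (ζ:ℂ) * u) ∧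
      (1 - ζ) * Complex.abs B ≤ Complex.abs (B + (ζ:ℂ) * u) := by
  have hn : Complex.normSq u ≤ Complex.normSq B := by
    rw [← Complex.sq_abs, ← Complex.sq_abs]
    exact pow_le_pow_left₀ (Complex.abs.nonneg u) h 2
  constructor
  · rw [Complex.abs_apply, Complex.abs_apply]
    refine Real.sqrt_le_sqrt ?_
    have expand : Complex.normSq (B + (ζ:ℂ) * u) - Complex.normSq ((ζ:ℂ) * B + u)
        = (1 - ζ^2) * (Complex.normSq B - Complex.normSq u) := by
      simp only [Complex.normSq_apply, Complex.add_re, Complex.add_im, Complex.mul_re,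
        Complex.mul_im, Complex.ofReal_re, Complex.ofReal_im]
      ring
    have h12 : 0 ≤ 1 - ζ^2 := by nlinarith
    nlinarith [mul_nonneg h12 (sub_nonneg.2 hn)]
  · have h1 : Complex.abs B ≤ Complex.abs (B + (ζ:ℂ) * u) + ζ * Complex.abs u := by
      calc Complex.abs B = Complex.abs ((B + (ζ:ℂ) * u) + (-((ζ:ℂ) * u))) := by ring_nf
        _ ≤ Complex.abs (B + (ζ:ℂ) * u) + Complex.abs (-((ζ:ℂ) * u)) :=
            Complex.abs.add_le _ _
        _ = Complex.abs (B + (ζ:ℂ) * u) + ζ * Complex.abs u := by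
            rw [map_neg_eq_map, map_mul, Complex.abs_ofReal, abs_of_pos hζ0]
    nlinarith [Complex.abs.nonneg u, h]

lemma outside_disk {ζ : ℝ} (hζ0 : 0 < ζ) (hζ1 : ζ < 1) (n : ℕ) (z : ℂ)
    (hz : Complex.abs z ≤ 1) :
    Complex.abs (z * eval z (Ppoly ζ n)) ≤ Complex.abs (eval z (Qpoly ζ n)) ∧
      eval z (Qpoly ζ n) ≠ 0 := by
  induction n with
  | zero => simpa [Ppoly_zero, Qpoly_zero] using hz
  | succ n ih =>
    obtain ⟨h, hB⟩ := ih
    set A := eval z (Ppoly ζ n)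
    set B := eval z (Qpoly ζ n)
    obtain ⟨k1, k2⟩ := key_ineq hζ0 hζ1 B (z * A) h
    have hQ1 : eval z (Qpoly ζ (n+1)) = (B + (ζ:ℂ) * (z * A)) ^ 2 := by
      simp [Qpoly_succ, A, B]
    have hP1 : eval z (Ppoly ζ (n+1)) = ((ζ:ℂ) * B + z * A) ^ 2 := by
      simp [Ppoly_succ, A, B]
    have hBpos : 0 < Complex.abs B := by
      simpa [Complex.abs.pos_iff] using hB
    have hne : B + (ζ:ℂ) * (z * A) ≠ 0 := by
      intro h0
      rw [h0] at k2
      simp only [map_zero] at k2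
      nlinarith
    refine ⟨?_, by rw [hQ1]; exact pow_ne_zero 2 hne⟩
    rw [hQ1, hP1, map_mul, map_pow, map_pow]
    calc Complex.abs z * Complex.abs ((ζ:ℂ) * B + z * A) ^ 2
        ≤ 1 * Complex.abs (B + (ζ:ℂ) * (z * A)) ^ 2 := by
          refine mul_le_mul hz (pow_le_pow_left₀ (Complex.abs.nonneg _) k1 2) (by positivity)
            zero_le_one
      _ = Complex.abs (B + (ζ:ℂ) * (z * A)) ^ 2 := one_mul _

lemma R_ne_on_disk {ζ : ℝ} (hζ0 : 0 < ζ) (hζ1 : ζ < 1) (n : ℕ) (z : ℂ)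
    (hz : Complex.abs z ≤ 1) : eval z (Rpoly ζ n) ≠ 0 := by
  obtain ⟨h, hB⟩ := outside_disk hζ0 hζ1 n z hz
  obtain ⟨-, k2⟩ := key_ineq hζ0 hζ1 (eval z (Qpoly ζ n)) (z * eval z (Ppoly ζ n)) h
  have hBpos : 0 < Complex.abs (eval z (Qpoly ζ n)) := by
    simpa [Complex.abs.pos_iff] using hB
  have : eval z (Rpoly ζ n)
      = eval z (Qpoly ζ n) + (ζ:ℂ) * (z * eval z (Ppoly ζ n)) := by
    simp [Rpoly_eq]; ring
  rw [this]
  intro h0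
  rw [h0] at k2
  simp only [map_zero] at k2
  nlinarith

lemma Z_outside {ζ : ℝ} (hζ0 : 0 < ζ) (hζ1 : ζ < 1) {w : ℂ} (hw : w ∈ ZsetAll ζ) :
    1 < Complex.abs w := by
  by_contra h
  push_neg at h
  obtain ⟨n, hn⟩ := Set.mem_iUnion.1 hw
  exact R_ne_on_disk hζ0 hζ1 n w h hn

lemma Q_ne_of_notZ {ζ : ℝ} {z : ℂ} (hz : z ∉ ZsetAll ζ) (n : ℕ) :
    eval z (Qpoly ζ n) ≠ 0 := by
  cases n with
  | zero => simp [Qpoly_zero]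
  | succ n =>
    rw [Qpoly_succ_R]
    simp only [eval_pow]
    refine pow_ne_zero 2 fun h0 => hz ?_
    exact Set.mem_iUnion.2 ⟨n, h0⟩

lemma R_ne_of_notZ {ζ : ℝ} {z : ℂ} (hz : z ∉ ZsetAll ζ) (n : ℕ) :
    eval z (Rpoly ζ n) ≠ 0 := fun h0 => hz (Set.mem_iUnion.2 ⟨n, h0⟩)

lemma tau_eq_PQ {ζ : ℝ} {z : ℂ} (hz : z ∉ ZsetAll ζ) (n : ℕ) :
    tauIter ζ z n = eval z (Ppoly ζ n) / eval z (Qpoly ζ n) := by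
  induction n with
  | zero => simp [tauIter, Ppoly_zero, Qpoly_zero]
  | succ n ih =>
    have hB := Q_ne_of_notZ hz n
    have hR := R_ne_of_notZ hz n
    set A := eval z (Ppoly ζ n)
    set B := eval z (Qpoly ζ n)
    have hRR : eval z (Rpoly ζ n) = (ζ:ℂ) * (z * A) + B := by simp [Rpoly_eq, A, B]
    rw [hRR] at hR
    have hQ1 : eval z (Qpoly ζ (n+1)) = (B + (ζ:ℂ) * (z * A)) ^ 2 := by simp [Qpoly_succ, A, B]
    have hP1 : eval z (Ppoly ζ (n+1)) = ((ζ:ℂ) * B + z * A) ^ 2 := by simp [Ppoly_succ, A, B]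
    show hmap ζ (z * tauIter ζ z n) = _
    rw [ih, hQ1, hP1, hmap]
    have hd : (1 : ℂ) + (ζ:ℂ) * (z * (A/B)) ≠ 0 := by
      have he : (1 : ℂ) + (ζ:ℂ) * (z * (A/B)) = ((ζ:ℂ) * (z*A) + B)/B := by
        field_simp
        ring
      rw [he]
      exact div_ne_zero hR hB
    field_simp

lemma abs_multiset_prod (s : Multiset ℂ) :
    Complex.abs s.prod = (s.map Complex.abs).prod := by
  induction s using Multiset.induction_on with
  | empty => simp
  | cons a s ih => simp [map_mul, ih]

lemma multiset_prod_nonneg (s : Multiset ℝ) (h : ∀ x ∈ s, 0 ≤ x) : 0 ≤ s.prod := by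
  induction s using Multiset.induction_on with
  | empty => simp
  | cons a s ih =>
    simp only [Multiset.prod_cons]
    exact mul_nonneg (h a (Multiset.mem_cons_self a s))
      (ih fun x hx => h x (Multiset.mem_cons_of_mem hx))

lemma multiset_prod_le_one (s : Multiset ℝ) (h0 : ∀ x ∈ s, 0 ≤ x) (h1 : ∀ x ∈ s, x ≤ 1) :
    s.prod ≤ 1 := by
  induction s using Multiset.induction_on with
  | empty => simp
  | cons a s ih =>
    simp only [Multiset.prod_cons]
    have ha0 := h0 a (Multiset.mem_cons_self a s)
    have hp0 := multiset_prod_nonneg s fun x hx => h0 x (Multiset.mem_cons_of_mem hx)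
    have hp1 := ih (fun x hx => h0 x (Multiset.mem_cons_of_mem hx))
      (fun x hx => h1 x (Multiset.mem_cons_of_mem hx))
    calc a * s.prod ≤ 1 * 1 :=
      mul_le_mul (h1 a (Multiset.mem_cons_self a s)) hp1 hp0 zero_le_one
    _ = 1 := one_mul 1

lemma multiset_prod_le_prod (s : Multiset ℂ) (f g : ℂ → ℝ)
    (h0 : ∀ x ∈ s, 0 ≤ f x) (h : ∀ x ∈ s, f x ≤ g x) :
    (s.map f).prod ≤ (s.map g).prod := by
  induction s using Multiset.induction_on with
  | empty => simp
  | cons a s ih =>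
    simp only [Multiset.map_cons, Multiset.prod_cons]
    have hf0 : 0 ≤ (s.map f).prod :=
      multiset_prod_nonneg _ (by
        intro x hx
        obtain ⟨y, hy, rfl⟩ := Multiset.mem_map.1 hx
        exact h0 y (Multiset.mem_cons_of_mem hy))
    have hga : 0 ≤ g a := le_trans (h0 a (Multiset.mem_cons_self a s))
      (h a (Multiset.mem_cons_self a s))
    exact mul_le_mul (h a (Multiset.mem_cons_self a s))
      (ih (fun x hx => h0 x (Multiset.mem_cons_of_mem hx))
          (fun x hx => h x (Multiset.mem_cons_of_mem hx))) hf0 hga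

lemma multiset_prod_exp (s : Multiset ℂ) (g : ℂ → ℝ) :
    (s.map fun x => Real.exp (g x)).prod = Real.exp ((s.map g).sum) := by
  induction s using Multiset.induction_on with
  | empty => simp
  | cons a s ih => simp [ih, Real.exp_add]

lemma multiset_natDegree_prod_le (s : Multiset ℂ) :
    ((s.map fun μ => (Polynomial.X : ℂ[X]) - Polynomial.C μ).prod).natDegree
      ≤ Multiset.card s := by
  induction s using Multiset.induction_on with
  | empty => simp
  | cons a s ih =>
    simp only [Multiset.map_cons, Multiset.prod_cons, Multiset.card_cons]
    refine le_trans natDegree_mul_le ?_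
    have : ((Polynomial.X : ℂ[X]) - Polynomial.C a).natDegree = 1 := natDegree_X_sub_C a
    omega

lemma reflect_prod_aux (s : Multiset ℂ) :
    reflect (Multiset.card s) ((s.map fun μ => (Polynomial.X : ℂ[X]) - Polynomial.C μ).prod)
      = (s.map fun μ => 1 - Polynomial.C μ * Polynomial.X).prod := by
  induction s using Multiset.induction_on with
  | empty => simp
  | cons a s ih =>
    simp only [Multiset.map_cons, Multiset.prod_cons, Multiset.card_cons]
    have hc : Multiset.card s + 1 = 1 + Multiset.card s := by omega
    rw [hc, reflect_mul _ _ (le_of_eq (natDegree_X_sub_C a)) (multiset_natDegree_prod_le s), ih]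
    congr 1
    have h1 : (Polynomial.X : ℂ[X]) - Polynomial.C a = Polynomial.X + Polynomial.C (-a) := by
      rw [map_neg]; ring
    rw [h1, reflect_add, reflect_one_X, reflect_C]
    rw [map_neg]; ring

lemma roots_card (ζ : ℝ) (n : ℕ) :
    Multiset.card (Ppoly ζ (n+1)).roots = dseq (n+1) := by
  rw [← (basics ζ (n+1)).2.1]
  exact splits_iff_card_roots.1 (IsAlgClosed.splits _)

lemma P_fact (ζ : ℝ) (n : ℕ) :
    Ppoly ζ (n+1)
      = ((Ppoly ζ (n+1)).roots.map fun μ => Polynomial.X - Polynomial.C μ).prod :=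
  (IsAlgClosed.splits _).eq_prod_roots_of_monic (basics ζ (n+1)).1

lemma Q_fact (ζ : ℝ) (n : ℕ) :
    Qpoly ζ (n+1)
      = ((Ppoly ζ (n+1)).roots.map fun μ => 1 - Polynomial.C μ * Polynomial.X).prod := by
  have h := reflect_prod_aux ((Ppoly ζ (n+1)).roots)
  rw [roots_card ζ n, ← P_fact ζ n] at h
  rw [← (reflects ζ (n+1)).1]
  exact h

lemma Q_eval_inv_root (ζ : ℝ) (n : ℕ) {μ : ℂ} (hμ : μ ∈ (Ppoly ζ (n+1)).roots)
    (hμ0 : μ ≠ 0) : eval μ⁻¹ (Qpoly ζ (n+1)) = 0 := by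
  rw [Q_fact, eval_multiset_prod, Multiset.map_map]
  refine Multiset.prod_eq_zero ?_
  refine Multiset.mem_map.2 ⟨μ, hμ, ?_⟩
  simp [mul_inv_cancel₀ hμ0]

lemma roots_abs_le_one {ζ : ℝ} (hζ0 : 0 < ζ) (hζ1 : ζ < 1) (n : ℕ) {μ : ℂ}
    (hμ : μ ∈ (Ppoly ζ (n+1)).roots) : Complex.abs μ ≤ 1 := by
  by_contra h
  push_neg at h
  have hμ0 : μ ≠ 0 := by
    intro h0
    rw [h0] at h
    simp at h
    linarith
  have hinv : Complex.abs μ⁻¹ ≤ 1 := by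
    rw [map_inv₀]
    exact inv_le_one_of_one_le₀ (le_of_lt h)
  exact (outside_disk hζ0 hζ1 (n+1) μ⁻¹ hinv).2 (Q_eval_inv_root ζ n hμ hμ0)

lemma roots_prod_abs {ζ : ℝ} (hζ0 : 0 < ζ) (n : ℕ) :
    ((Ppoly ζ (n+1)).roots.map Complex.abs).prod = ζ^2 := by
  have h0 := evalP0 ζ n
  have h1 : eval 0 (Ppoly ζ (n+1)) = ((Ppoly ζ (n+1)).roots.map fun μ => -μ).prod := by
    conv_lhs => rw [P_fact ζ n]
    rw [eval_multiset_prod, Multiset.map_map]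
    congr 1
    refine Multiset.map_congr rfl fun x _ => ?_
    simp
  have h2 : Complex.abs (eval 0 (Ppoly ζ (n+1))) = ζ^2 := by
    rw [h0, map_pow, Complex.abs_ofReal, abs_of_pos hζ0]
  rw [h1, abs_multiset_prod, Multiset.map_map] at h2
  rw [← h2]
  refine congrArg _ (Multiset.map_congr rfl fun x _ => ?_)
  simp

lemma roots_abs_ge {ζ : ℝ} (hζ0 : 0 < ζ) (hζ1 : ζ < 1) (n : ℕ) {μ : ℂ}
    (hμ : μ ∈ (Ppoly ζ (n+1)).roots) : ζ^2 ≤ Complex.abs μ := by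
  classical
  have h1 := Multiset.prod_map_erase (f := Complex.abs) hμ
  rw [roots_prod_abs hζ0 n] at h1
  have hrest : (((Ppoly ζ (n+1)).roots.erase μ).map Complex.abs).prod ≤ 1 := by
    refine multiset_prod_le_one _ (fun x hx => ?_) (fun x hx => ?_)
    · obtain ⟨y, hy, rfl⟩ := Multiset.mem_map.1 hx
      exact Complex.abs.nonneg y
    · obtain ⟨y, hy, rfl⟩ := Multiset.mem_map.1 hx
      exact roots_abs_le_one hζ0 hζ1 n (Multiset.mem_of_mem_erase hy)
  have hrest0 : 0 ≤ (((Ppoly ζ (n+1)).roots.erase μ).map Complex.abs).prod :=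
    multiset_prod_nonneg _ (fun x hx => by
      obtain ⟨y, hy, rfl⟩ := Multiset.mem_map.1 hx
      exact Complex.abs.nonneg y)
  nlinarith [Complex.abs.nonneg μ]

lemma nu_mem {ζ : ℝ} (hζ0 : 0 < ζ) (hζ1 : ζ < 1) (n : ℕ) {μ : ℂ}
    (hμ : μ ∈ (Ppoly ζ (n+1)).roots) : ((starRingEnd ℂ) μ)⁻¹ ∈ ZsetAll ζ := by
  have hμ0 : μ ≠ 0 := by
    intro h0
    have := roots_abs_ge hζ0 hζ1 n hμ
    rw [h0] at this
    simp at this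
    nlinarith
  have hQ := Q_eval_inv_root ζ n hμ hμ0
  have hconj : eval ((starRingEnd ℂ) μ⁻¹) (Qpoly ζ (n+1)) = 0 := by
    rw [(conj_eval ζ (n+1) μ⁻¹).2, hQ, map_zero]
  rw [Qpoly_succ_R] at hconj
  simp only [eval_pow] at hconj
  have hR : eval ((starRingEnd ℂ) μ⁻¹) (Rpoly ζ n) = 0 := by
    exact pow_eq_zero_iff (two_ne_zero) |>.1 hconj
  rw [map_inv₀] at hR
  exact Set.mem_iUnion.2 ⟨n, hR⟩

lemma multiset_prod_pos' (t : Multiset ℝ) (h : ∀ x ∈ t, 0 < x) : 0 < t.prod := by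
  induction t using Multiset.induction_on with
  | empty => simp
  | cons a t ih =>
    simp only [Multiset.prod_cons]
    exact mul_pos (h a (Multiset.mem_cons_self a t))
      (ih fun x hx => h x (Multiset.mem_cons_of_mem hx))

lemma multiset_log_inv_prod (t : Multiset ℝ) (h : ∀ x ∈ t, 0 < x) :
    (t.map fun x => Real.log (1/x)).sum = Real.log (1/t.prod) := by
  induction t using Multiset.induction_on with
  | empty => simp
  | cons a t ih =>
    have ha := h a (Multiset.mem_cons_self a t)
    have ht : ∀ x ∈ t, 0 < x := fun x hx => h x (Multiset.mem_cons_of_mem hx)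
    have htp : 0 < t.prod := multiset_prod_pos' t ht
    simp only [Multiset.map_cons, Multiset.sum_cons, Multiset.prod_cons, ih ht]
    rw [one_div, one_div, one_div, mul_inv, Real.log_mul (by positivity) (by positivity)]

lemma factor_bound {ζ : ℝ} (hζ0 : 0 < ζ) (hζ1 : ζ < 1) {z μ : ℂ} {d : ℝ} (hd : 0 < d)
    (hm1 : Complex.abs μ ≤ 1) (hm2 : ζ^2 ≤ Complex.abs μ)
    (hnu : d ≤ dist z (((starRingEnd ℂ) μ)⁻¹)) :
    Complex.abs (z - μ) / Complex.abs (1 - μ * (starRingEnd ℂ) z)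
      ≤ Real.exp ((1 + 2/(ζ^2*d)) * Real.log (1/Complex.abs μ)) := by
  set m := Complex.abs μ with hm
  have hζ2 : (0:ℝ) < ζ^2 := by positivity
  have hm0 : 0 < m := lt_of_lt_of_le hζ2 hm2
  have hμ0 : μ ≠ 0 := by
    intro h0; rw [h0] at hm; simp [hm] at hm0
  have hcμ0 : (starRingEnd ℂ) μ ≠ 0 := by simpa using hμ0
  set ν : ℂ := ((starRingEnd ℂ) μ)⁻¹ with hν
  have habsconj : Complex.abs ((starRingEnd ℂ) μ) = m := Complex.abs_conj μ
  -- step A : denominator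
  have hA : Complex.abs (1 - μ * (starRingEnd ℂ) z) = m * Complex.abs (z - ν) := by
    have e1 : (1 : ℂ) - μ * (starRingEnd ℂ) z
        = (starRingEnd ℂ) (1 - (starRingEnd ℂ) μ * z) := by
      simp [map_sub, map_mul]
    have e2 : (1 : ℂ) - (starRingEnd ℂ) μ * z = -((starRingEnd ℂ) μ) * (z - ν) := by
      rw [hν]
      field_simp
      ring
    rw [e1, Complex.abs_conj, e2, map_mul, map_neg_eq_map, habsconj]
  -- step B : |μ - ν|
  have hB : Complex.abs (μ - ν) = (1 - m^2)/m := by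
    have e3 : μ - ν = (μ * (starRingEnd ℂ) μ - 1) * ((starRingEnd ℂ) μ)⁻¹ := by
      rw [hν]
      field_simp
    rw [e3, map_mul, map_inv₀, habsconj]
    rw [Complex.mul_conj]
    have e4 : ((Complex.normSq μ : ℂ)) - 1 = ((Complex.normSq μ - 1 : ℝ) : ℂ) := by
      push_cast; ring
    rw [e4, Complex.abs_ofReal, Complex.normSq_eq_abs, ← hm]
    rw [abs_of_nonpos (by nlinarith)]
    ring
  -- distances
  have ha : d ≤ Complex.abs (z - ν) := by rwa [← Complex.dist_eq_abs]
  set A := Complex.abs (z - ν) with hA'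
  have hApos : 0 < A := lt_of_lt_of_le hd ha
  -- numerator bound
  have hnum : Complex.abs (z - μ) ≤ A + (1 - m^2)/m := by
    calc Complex.abs (z - μ) = Complex.abs ((z - ν) + (ν - μ)) := by ring_nf
      _ ≤ Complex.abs (z - ν) + Complex.abs (ν - μ) := Complex.abs.add_le _ _
      _ = A + (1 - m^2)/m := by
          rw [← neg_sub μ ν, map_neg_eq_map, hB]
  -- key real inequality
  set t : ℝ := 2/(ζ^2*d) with ht
  have htpos : 0 < t := by positivity
  have hL : 1 - m ≤ Real.log (1/m) := by
    have := Real.log_le_sub_one_of_pos hm0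
    rw [one_div, Real.log_inv]
    linarith
  have hLpos : 0 ≤ Real.log (1/m) := by
    refine Real.log_nonneg ?_
    rw [le_div_iff₀ hm0]
    linarith
  have hstep1 : Complex.abs (z - μ) / Complex.abs (1 - μ * (starRingEnd ℂ) z)
      ≤ (1/m) * (1 + t * (1 - m)) := by
    rw [hA]
    rw [div_le_iff₀ (by positivity)]
    have h5 : (1 - m^2)/m ≤ A * t * (1-m) := by
      have h6 : (1 - m^2)/m ≤ 2*(1-m)/ζ^2 := by
        rw [div_le_div_iff₀ hm0 hζ2]
        have hinner : (1+m)*ζ^2 ≤ 2*m := by nlinarith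
        have key := mul_le_mul_of_nonneg_left hinner (sub_nonneg.2 hm1)
        nlinarith [key]
      have h7 : 2/ζ^2 ≤ A * t := by
        rw [ht]
        have : A * (2/(ζ^2*d)) = (A/d) * (2/ζ^2) := by field_simp
        rw [this]
        have h8 : 1 ≤ A/d := (one_le_div hd).2 ha
        nlinarith [div_pos (by norm_num : (0:ℝ) < 2) hζ2]
      have h7' : (1-m) * (2/ζ^2) ≤ (1-m) * (A*t) :=
        mul_le_mul_of_nonneg_left h7 (sub_nonneg.2 hm1)
      have e8 : 2*(1-m)/ζ^2 = (1-m)*(2/ζ^2) := by ring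
      calc (1 - m^2)/m ≤ 2*(1-m)/ζ^2 := h6
        _ = (1-m)*(2/ζ^2) := e8
        _ ≤ (1-m)*(A*t) := h7'
        _ = A*t*(1-m) := by ring
    calc Complex.abs (z - μ) ≤ A + (1 - m^2)/m := hnum
      _ ≤ A + A * t * (1-m) := by linarith
      _ = 1/m * (1 + t*(1-m)) * (m * A) := by field_simp
  have hstep2 : (1/m) * (1 + t * (1 - m))
      ≤ Real.exp ((1 + t) * Real.log (1/m)) := by
    have e5 : Real.exp ((1 + t) * Real.log (1/m))
        = Real.exp (Real.log (1/m)) * Real.exp (t * Real.log (1/m)) := by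
      rw [← Real.exp_add]
      congr 1
      ring
    rw [e5, Real.exp_log (by positivity)]
    have h9 : 1 + t * (1-m) ≤ Real.exp (t * Real.log (1/m)) := by
      have h10 : t * (1-m) ≤ t * Real.log (1/m) :=
        mul_le_mul_of_nonneg_left hL (le_of_lt htpos)
      have h11 := Real.add_one_le_exp (t * Real.log (1/m))
      linarith
    have h13 : (0:ℝ) ≤ 1/m := by positivity
    exact mul_le_mul_of_nonneg_left h9 h13
  exact le_trans hstep1 hstep2

lemma tau_bound {ζ : ℝ} (hζ0 : 0 < ζ) (hζ1 : ζ < 1) {z : ℂ} {d : ℝ} (hd : 0 < d)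
    (hdist : ∀ w ∈ ZsetAll ζ, d ≤ dist z w) (n : ℕ) :
    Complex.abs (tauIter ζ z n) ≤ Real.exp ((1 + 2/(ζ^2*d)) * Real.log (1/ζ^2)) := by
  have hζ2 : (0:ℝ) < ζ^2 := by positivity
  have hlog : 0 ≤ Real.log (1/ζ^2) := by
    refine Real.log_nonneg ?_
    rw [le_div_iff₀ hζ2]
    nlinarith
  have hKL : 0 ≤ (1 + 2/(ζ^2*d)) * Real.log (1/ζ^2) :=
    mul_nonneg (by positivity) hlog
  have hzZ : z ∉ ZsetAll ζ := by
    intro hzin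
    have := hdist z hzin
    simp only [dist_self] at this
    linarith
  cases n with
  | zero =>
    show Complex.abs 1 ≤ _
    rw [map_one]
    calc (1:ℝ) = Real.exp 0 := Real.exp_zero.symm
      _ ≤ _ := Real.exp_le_exp.2 hKL
  | succ n =>
    set K : ℝ := 1 + 2/(ζ^2*d) with hK
    set s := (Ppoly ζ (n+1)).roots with hs
    have hmem1 : ∀ μ ∈ s, Complex.abs μ ≤ 1 := fun μ hμ => roots_abs_le_one hζ0 hζ1 n hμ
    have hmem2 : ∀ μ ∈ s, ζ^2 ≤ Complex.abs μ := fun μ hμ => roots_abs_ge hζ0 hζ1 n hμ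
    have hmem3 : ∀ μ ∈ s, d ≤ dist z (((starRingEnd ℂ) μ)⁻¹) :=
      fun μ hμ => hdist _ (nu_mem hζ0 hζ1 n hμ)
    have hden : ∀ μ ∈ s, Complex.abs (1 - μ * (starRingEnd ℂ) z) ≠ 0 := by
      intro μ hμ h0
      have hμ0 : μ ≠ 0 := by
        intro hc
        have := hmem2 μ hμ
        rw [hc] at this
        simp at this
        nlinarith
      rw [Complex.abs.eq_zero, sub_eq_zero] at h0
      have hz' : z = ((starRingEnd ℂ) μ)⁻¹ := by
        have h1 : (starRingEnd ℂ) z = μ⁻¹ := by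
          field_simp
          linear_combination -h0
        calc z = (starRingEnd ℂ) ((starRingEnd ℂ) z) := (Complex.conj_conj z).symm
          _ = (starRingEnd ℂ) (μ⁻¹) := by rw [h1]
          _ = ((starRingEnd ℂ) μ)⁻¹ := map_inv₀ _ _
      have := hmem3 μ hμ
      rw [← hz'] at this
      simp only [dist_self] at this
      linarith
    -- |P(z)| as a product
    have hP : Complex.abs (eval z (Ppoly ζ (n+1)))
        = (s.map fun μ => Complex.abs (z - μ)).prod := by
      conv_lhs => rw [P_fact ζ n]
      rw [eval_multiset_prod, Multiset.map_map, abs_multiset_prod, Multiset.map_map]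
      refine congrArg _ (Multiset.map_congr rfl fun x _ => ?_)
      simp
    -- |Q(z)| as a product
    have hQ : Complex.abs (eval z (Qpoly ζ (n+1)))
        = (s.map fun μ => Complex.abs (1 - μ * (starRingEnd ℂ) z)).prod := by
      have hc : Complex.abs (eval z (Qpoly ζ (n+1)))
          = Complex.abs (eval ((starRingEnd ℂ) z) (Qpoly ζ (n+1))) := by
        rw [(conj_eval ζ (n+1) z).2, Complex.abs_conj]
      rw [hc]
      conv_lhs => rw [Q_fact ζ n]
      rw [eval_multiset_prod, Multiset.map_map, abs_multiset_prod, Multiset.map_map]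
      refine congrArg _ (Multiset.map_congr rfl fun x _ => ?_)
      simp
    have hQne : eval z (Qpoly ζ (n+1)) ≠ 0 := Q_ne_of_notZ hzZ (n+1)
    have hprodD_ne : (s.map fun μ => Complex.abs (1 - μ * (starRingEnd ℂ) z)).prod ≠ 0 := by
      rw [← hQ]
      simpa using hQne
    have hfactor : (s.map fun μ =>
          Complex.abs (z - μ) / Complex.abs (1 - μ * (starRingEnd ℂ) z)).prod
        * (s.map fun μ => Complex.abs (1 - μ * (starRingEnd ℂ) z)).prod
        = (s.map fun μ => Complex.abs (z - μ)).prod := by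
      rw [← Multiset.prod_map_mul]
      refine congrArg _ (Multiset.map_congr rfl fun x hx => ?_)
      exact div_mul_cancel₀ _ (hden x hx)
    have htau : Complex.abs (tauIter ζ z (n+1))
        = (s.map fun μ =>
            Complex.abs (z - μ) / Complex.abs (1 - μ * (starRingEnd ℂ) z)).prod := by
      rw [tau_eq_PQ hzZ (n+1), map_div₀, hP, hQ, ← hfactor]
      rw [mul_div_assoc, div_self hprodD_ne, mul_one]
    rw [htau]
    have hle1 : (s.map fun μ =>
          Complex.abs (z - μ) / Complex.abs (1 - μ * (starRingEnd ℂ) z)).prod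
        ≤ (s.map fun μ => Real.exp (K * Real.log (1/Complex.abs μ))).prod := by
      refine multiset_prod_le_prod s _ _ (fun x _ => by positivity) (fun x hx => ?_)
      exact factor_bound hζ0 hζ1 hd (hmem1 x hx) (hmem2 x hx) (hmem3 x hx)
    refine le_trans hle1 (le_of_eq ?_)
    rw [multiset_prod_exp, Multiset.sum_map_mul_left]
    congr 1
    have hmm : (s.map fun μ => Real.log (1/Complex.abs μ))
        = (s.map Complex.abs).map fun x => Real.log (1/x) := by
      rw [Multiset.map_map]
      rfl
    rw [hmm, multiset_log_inv_prod _ (fun x hx => by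
      obtain ⟨y, hy, rfl⟩ := Multiset.mem_map.1 hx
      exact lt_of_lt_of_le hζ2 (hmem2 y hy)), roots_prod_abs hζ0 n]

lemma Z_nonempty {ζ : ℝ} (hζ0 : 0 < ζ) : (ZsetAll ζ).Nonempty := by
  refine ⟨-(ζ:ℂ)⁻¹, Set.mem_iUnion.2 ⟨0, ?_⟩⟩
  have hζ : (ζ:ℂ) ≠ 0 := by
    simp only [ne_eq, Complex.ofReal_eq_zero]
    exact ne_of_gt hζ0
  show eval (-(ζ:ℂ)⁻¹) (Rpoly ζ 0) = 0
  rw [Rpoly_eq, Ppoly_zero, Qpoly_zero]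
  simp only [eval_add, eval_mul, eval_C, eval_X, eval_one, mul_one]
  field_simp
  ring

end Aux

open Aux

/-- (Second Analyticity Theorem.) For `0 < ζ < 1`, `r ≥ 1` and a summable sequence of
nonnegative reals `a`, the series `F_r(z) = Σ aₙ (τ_z^{(n)}(1))^r` converges at every
point of `U = {|z| > 1} \ closure 𝒵` and defines an analytic function there. -/
theorem stmt9 (ζ : ℝ) (hζ0 : 0 < ζ) (hζ1 : ζ < 1) (r : ℕ) (hr : 1 ≤ r)
    (a : ℕ → ℝ) (ha : Summable a) (ha' : ∀ n, 0 ≤ a n) :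
    (∀ z ∈ {z : ℂ | 1 < ‖z‖} \ closure (ZsetAll ζ),
        Summable (fun n : ℕ => (a n : ℂ) * (tauIter ζ z n) ^ r)) ∧
    AnalyticOnNhd ℂ (fun z => ∑' n : ℕ, (a n : ℂ) * (tauIter ζ z n) ^ r)
      ({z : ℂ | 1 < ‖z‖} \ closure (ZsetAll ζ)) := by
  have hζ2 : (0:ℝ) < ζ^2 := by positivity
  have hZc : IsClosed (closure (ZsetAll ζ)) := isClosed_closure
  have hZne : (closure (ZsetAll ζ)).Nonempty := (Z_nonempty hζ0).closure
  -- the uniform bound on a set where distance to Z is at least d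
  set Mb : ℝ → ℝ := fun d => Real.exp ((1 + 2/(ζ^2*d)) * Real.log (1/ζ^2)) with hMb
  have norm_bound : ∀ (d : ℝ), 0 < d → ∀ (z : ℂ), (∀ w ∈ ZsetAll ζ, d ≤ dist z w) →
      ∀ n : ℕ, ‖(a n : ℂ) * (tauIter ζ z n) ^ r‖ ≤ a n * (Mb d)^r := by
    intro d hd z hz n
    rw [norm_mul, norm_pow, Complex.norm_real, Real.norm_eq_abs, abs_of_nonneg (ha' n)]
    refine mul_le_mul_of_nonneg_left ?_ (ha' n)
    refine pow_le_pow_left₀ (norm_nonneg _) ?_ r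
    rw [Complex.norm_eq_abs]
    exact tau_bound hζ0 hζ1 hd hz n
  constructor
  · rintro z ⟨hz1, hz2⟩
    set d := Metric.infDist z (closure (ZsetAll ζ)) with hd
    have hdpos : 0 < d := (hZc.notMem_iff_infDist_pos hZne).1 hz2
    have hdist : ∀ w ∈ ZsetAll ζ, d ≤ dist z w := fun w hw =>
      Metric.infDist_le_dist_of_mem (subset_closure hw)
    exact Summable.of_norm_bounded (ha.mul_right ((Mb d)^r))
      (norm_bound d hdpos z hdist)
  · rintro z₀ ⟨hz1, hz2⟩
    set ε := Metric.infDist z₀ (closure (ZsetAll ζ)) with hε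
    have hεpos : 0 < ε := (hZc.notMem_iff_infDist_pos hZne).1 hz2
    set B := Metric.ball z₀ (ε/2) with hB
    have hBopen : IsOpen B := Metric.isOpen_ball
    have hBdist : ∀ z ∈ B, ∀ w ∈ ZsetAll ζ, ε/2 ≤ dist z w := by
      intro z hz w hw
      have h1 : ε ≤ dist z₀ w := Metric.infDist_le_dist_of_mem (subset_closure hw)
      have h2 : dist z₀ z < ε/2 := by
        rw [dist_comm]
        exact Metric.mem_ball.1 hz
      have h3 : dist z₀ w ≤ dist z₀ z + dist z w := dist_triangle _ _ _
      linarith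
    have hBnotZ : ∀ z ∈ B, z ∉ ZsetAll ζ := by
      intro z hz hzin
      have := hBdist z hz z hzin
      simp only [dist_self] at this
      linarith
    have hsum : Summable (fun n => a n * (Mb (ε/2))^r) := ha.mul_right _
    have hTU := tendstoUniformlyOn_tsum (f := fun (n : ℕ) (z : ℂ) =>
        (a n : ℂ) * (tauIter ζ z n) ^ r) hsum (s := B)
      (fun n z hz => norm_bound (ε/2) (by positivity) z (hBdist z hz) n)
    have htauD : ∀ n : ℕ, DifferentiableOn ℂ (fun z => tauIter ζ z n) B := by
      intro n
      have hpq : DifferentiableOn ℂ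
          (fun z => eval z (Ppoly ζ n) / eval z (Qpoly ζ n)) B :=
        DifferentiableOn.div ((Ppoly ζ n).differentiable.differentiableOn)
          ((Qpoly ζ n).differentiable.differentiableOn)
          (fun z hz => Q_ne_of_notZ (hBnotZ z hz) n)
      exact hpq.congr (fun z hz => tau_eq_PQ (hBnotZ z hz) n)
    have hdiff : ∀ t : Finset ℕ, DifferentiableOn ℂ
        (fun z => ∑ n ∈ t, (a n : ℂ) * (tauIter ζ z n) ^ r) B := by
      intro t
      refine DifferentiableOn.fun_sum fun n _ => ?_
      exact (differentiableOn_const _).mul ((htauD n).pow r)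
    have hDiffLim : DifferentiableOn ℂ
        (fun z => ∑' n : ℕ, (a n : ℂ) * (tauIter ζ z n) ^ r) B :=
      (hTU.tendstoLocallyUniformlyOn).differentiableOn
        (Filter.Eventually.of_forall hdiff) hBopen
    exact hDiffLim.analyticAt (hBopen.mem_nhds (Metric.mem_ball_self (by positivity)))
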